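/- Let G = (V,E) be the directed spanner instance built from a projection games instance in which every vertex of L has degree exactly K ≥ 1, with parameter k ≥ 2, and assume in addition that: a := m/n ≥ 1; every vertex of R has degree at most 2·K·a in E_Proj; a ≤ 12·K^{1/2}; and every assignment α : L∪R → Σ satisfies fewer than m·a/576 edges of E_Proj (where α satisfies {c_i,x_j} if π_{i,j}(α(c_i)) = α(x_j)). Then every (2k−1)-spanner of G has at least n·k·K^{3/2}·|Σ| edges. -/

import Mathlib

open Finset

/-- A directed path in the graph with edge set `E`, from `u` to `v`, given as its (nonempty)
list of edges: consecutive edges are incident, the first edge starts at `u`, the last edge ends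
at `v`, and no vertex is visited twice. -/
def IsDirPath {V : Type*} [DecidableEq V] (E : Finset (V × V)) (u v : V)
    (p : List (V × V)) : Prop :=
  p ≠ [] ∧ (∀ e ∈ p, e ∈ E) ∧ Option.map Prod.fst p.head? = some u ∧
    Option.map Prod.snd p.getLast? = some v ∧
    List.Chain' (fun e f => e.2 = f.1) p ∧ (u :: p.map Prod.snd).Nodup

/-- `z ∈ Z^{u,v}` (with respect to stretch `t`): a fractional cut against the stretch-`t`
paths from `u` to `v`, i.e. `z : E → [0,1]` with `∑_{e ∈ P} z e ≥ 1` for every path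
`P ∈ 𝒫_{u,v}` (at most `t` edges). -/
def InZ {V : Type*} [DecidableEq V] (E : Finset (V × V)) (t : ℕ) (u v : V)
    (z : V × V → ℝ) : Prop :=
  (∀ e ∈ E, 0 ≤ z e ∧ z e ≤ 1) ∧
  ∀ p : List (V × V), IsDirPath E u v p → p.length ≤ t → 1 ≤ (p.map z).sum

/-- A `t`-spanner of the directed graph with edge set `E`: a subset `S ⊆ E` such that every
edge `(u,v) ∈ E` is spanned by a directed path from `u` to `v` of at most `t` edges,
all belonging to `S`. -/
def IsSpanner {V : Type*} [DecidableEq V] (E S : Finset (V × V)) (t : ℕ) : Prop :=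
  S ⊆ E ∧ ∀ e ∈ E, ∃ p : List (V × V), IsDirPath S e.1 e.2 p ∧ p.length ≤ t

/-- The moment matrix `(y_{I ∪ J})`, indexed by the subsets `I, J ⊆ E` with `|I|, |J| ≤ r`. -/
def momentMatrixE {α : Type*} [Fintype α] [DecidableEq α] (E : Finset α) (r : ℕ)
    (y : Finset α → ℝ) :
    Matrix {S : Finset α // S ⊆ E ∧ S.card ≤ r} {S : Finset α // S ⊆ E ∧ S.card ≤ r} ℝ :=
  Matrix.of fun I J => y (I.1 ∪ J.1)

/-- The slack moment matrix `(∑_{e ∈ E} z e · y_{I∪J∪{e}} − y_{I∪J})`, indexed by the subsets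
`I, J ⊆ E` with `|I|, |J| ≤ r`. -/
def slackMatrixE {α : Type*} [Fintype α] [DecidableEq α] (E : Finset α) (r : ℕ)
    (y : Finset α → ℝ) (z : α → ℝ) :
    Matrix {S : Finset α // S ⊆ E ∧ S.card ≤ r} {S : Finset α // S ⊆ E ∧ S.card ≤ r} ℝ :=
  Matrix.of fun I J => (∑ e ∈ E, z e * y (insert e (I.1 ∪ J.1))) - y (I.1 ∪ J.1)

/-- The ambient vertex type for the directed `(2k−1)`-spanner instance built from a projection
games instance with left vertices `L`, right vertices `R` and alphabet `Sg`; `D` is the number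
of duplicate vertices (`D = k·K·|Σ|`) and `T` the number of internal vertices of each middle
path (`T = 2k−4`).  The five summands are: the label vertices `c_{i,σ}`, the duplicate vertices
`c_i^l`, the label vertices `x_{j,σ}`, the duplicate vertices `x_j^l`, and the middle-path
vertices `w_{i,j,σL,σR,t}`. -/
abbrev SpV (L R Sg : Type) (D T : ℕ) : Type :=
  (L × Sg) ⊕ (L × Fin D) ⊕ (R × Sg) ⊕ (R × Fin D) ⊕ (L × R × Sg × Sg × Fin T)

namespace SpV

variable {L R Sg : Type} {D T : ℕ}

/-- The label vertex `c_{i,σ}`. -/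
def cLab (i : L) (σ : Sg) : SpV L R Sg D T := Sum.inl (i, σ)

/-- The duplicate vertex `c_i^l`. -/
def cDup (i : L) (l : Fin D) : SpV L R Sg D T := Sum.inr (Sum.inl (i, l))

/-- The label vertex `x_{j,σ}`. -/
def xLab (j : R) (σ : Sg) : SpV L R Sg D T := Sum.inr (Sum.inr (Sum.inl (j, σ)))

/-- The duplicate vertex `x_j^l`. -/
def xDup (j : R) (l : Fin D) : SpV L R Sg D T :=
  Sum.inr (Sum.inr (Sum.inr (Sum.inl (j, l))))

/-- The middle-path vertex `w_{i,j,σL,σR,t}`. -/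
def mid (i : L) (j : R) (σL σR : Sg) (t : Fin T) : SpV L R Sg D T :=
  Sum.inr (Sum.inr (Sum.inr (Sum.inr (i, j, σL, σR, t))))

end SpV

set_option synthInstance.maxSize 1000 in
instance SpV.instDecidableEq {L R Sg : Type} [DecidableEq L] [DecidableEq R] [DecidableEq Sg]
    {D T : ℕ} : DecidableEq (SpV L R Sg D T) := inferInstance

instance SpV.instFintype {L R Sg : Type} [Fintype L] [Fintype R] [Fintype Sg] {D T : ℕ} :
    Fintype (SpV L R Sg D T) := inferInstance

namespace Spanner

/-- The number `k·K·|Σ|` of duplicate vertices per projection-games vertex. -/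
abbrev numDup (Sg : Type) [Fintype Sg] (k K : ℕ) : ℕ := k * K * Fintype.card Sg

/-- The vertex type of the directed spanner instance with parameters `k, K`. -/
abbrev Vt (L R Sg : Type) [Fintype Sg] (k K : ℕ) : Type :=
  SpV L R Sg (numDup Sg k K) (2 * k - 4)

/-- The edge set `E_L = {(c_i^l, c_{i,σ})}`. -/
def ELedges (L R Sg : Type) [Fintype L] [Fintype R] [Fintype Sg]
    [DecidableEq L] [DecidableEq R] [DecidableEq Sg] (k K : ℕ) :
    Finset (Vt L R Sg k K × Vt L R Sg k K) :=
  Finset.univ.image fun p : L × Fin (numDup Sg k K) × Sg =>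
    (SpV.cDup p.1 p.2.1, SpV.cLab p.1 p.2.2)

/-- The edge set `E_R = {(x_{j,σ}, x_j^l)}`. -/
def ERedges (L R Sg : Type) [Fintype L] [Fintype R] [Fintype Sg]
    [DecidableEq L] [DecidableEq R] [DecidableEq Sg] (k K : ℕ) :
    Finset (Vt L R Sg k K × Vt L R Sg k K) :=
  Finset.univ.image fun p : R × Fin (numDup Sg k K) × Sg =>
    (SpV.xLab p.1 p.2.2, SpV.xDup p.1 p.2.1)

/-- The edge set `E_LStars = {(c_{i,1}, c_{i,σ}), (c_{i,σ}, c_{i,1}) : σ ≠ 1}`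
(`σ0` plays the role of the fixed label `1 ∈ Σ`). -/
def ELStars (L R : Type) {Sg : Type} [Fintype L] [Fintype R] [Fintype Sg]
    [DecidableEq L] [DecidableEq R] [DecidableEq Sg] (σ0 : Sg) (k K : ℕ) :
    Finset (Vt L R Sg k K × Vt L R Sg k K) :=
  ((Finset.univ.filter fun p : L × Sg => p.2 ≠ σ0).image fun p =>
      (SpV.cLab p.1 σ0, SpV.cLab p.1 p.2)) ∪
  ((Finset.univ.filter fun p : L × Sg => p.2 ≠ σ0).image fun p =>
      (SpV.cLab p.1 p.2, SpV.cLab p.1 σ0))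

/-- The edge set `E_RStars = {(x_{j,1}, x_{j,σ}), (x_{j,σ}, x_{j,1}) : σ ≠ 1}`. -/
def ERStars (L R : Type) {Sg : Type} [Fintype L] [Fintype R] [Fintype Sg]
    [DecidableEq L] [DecidableEq R] [DecidableEq Sg] (σ0 : Sg) (k K : ℕ) :
    Finset (Vt L R Sg k K × Vt L R Sg k K) :=
  ((Finset.univ.filter fun p : R × Sg => p.2 ≠ σ0).image fun p =>
      (SpV.xLab p.1 σ0, SpV.xLab p.1 p.2)) ∪
  ((Finset.univ.filter fun p : R × Sg => p.2 ≠ σ0).image fun p =>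
      (SpV.xLab p.1 p.2, SpV.xLab p.1 σ0))

/-- The edge set `E_Outer = {(c_i^l, x_j^l) : {c_i, x_j} ∈ E_Proj, l ∈ [kK|Σ|]}`. -/
def EOuter {L R : Type} (Sg : Type) [Fintype L] [Fintype R] [Fintype Sg]
    [DecidableEq L] [DecidableEq R] [DecidableEq Sg]
    (Eproj : Finset (L × R)) (k K : ℕ) :
    Finset (Vt L R Sg k K × Vt L R Sg k K) :=
  (Eproj ×ˢ (Finset.univ : Finset (Fin (numDup Sg k K)))).image fun p =>
    (SpV.cDup p.1.1 p.2, SpV.xDup p.1.2 p.2)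

/-- The vertex sequence `c_{i,σL}, w_{i,j,σL,σR,1}, …, w_{i,j,σL,σR,2k−4}, x_{j,σR}` of the
middle path (for `k = 2` it is just `c_{i,σL}, x_{j,σR}`). -/
def midVerts {L R Sg : Type} [Fintype Sg] (k K : ℕ) (i : L) (j : R) (σL σR : Sg) :
    List (Vt L R Sg k K) :=
  (SpV.cLab i σL :: (List.finRange (2 * k - 4)).map fun t => SpV.mid i j σL σR t) ++
    [SpV.xLab j σR]

/-- The list of consecutive edges of a vertex sequence. -/
def pathEdges {V : Type*} (vs : List V) : List (V × V) := vs.zip vs.tail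

/-- The edge list `E_M^{i,j,σL,σR}` of the middle path from `c_{i,σL}` to `x_{j,σR}`. -/
def EMpath {L R Sg : Type} [Fintype Sg] (k K : ℕ) (i : L) (j : R) (σL σR : Sg) :
    List (Vt L R Sg k K × Vt L R Sg k K) :=
  pathEdges (midVerts k K i j σL σR)

/-- The edge set `E_M = ⋃_{ {c_i,x_j} ∈ E_Proj, (σL,σR) ∈ π_{i,j} } E_M^{i,j,σL,σR}`. -/
def EMedges {L R Sg : Type} [Fintype L] [Fintype R] [Fintype Sg]
    [DecidableEq L] [DecidableEq R] [DecidableEq Sg]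
    (Eproj : Finset (L × R)) (π : L → R → Sg → Sg) (k K : ℕ) :
    Finset (Vt L R Sg k K × Vt L R Sg k K) :=
  Eproj.biUnion fun e => (Finset.univ : Finset Sg).biUnion fun σL =>
    (EMpath k K e.1 e.2 σL (π e.1 e.2 σL)).toFinset

/-- The edge set `E = E_L ∪ E_LStars ∪ E_M ∪ E_RStars ∪ E_R ∪ E_Outer` of the directed
spanner instance. -/
def Edges {L R Sg : Type} [Fintype L] [Fintype R] [Fintype Sg]
    [DecidableEq L] [DecidableEq R] [DecidableEq Sg]
    (Eproj : Finset (L × R)) (π : L → R → Sg → Sg) (σ0 : Sg) (k K : ℕ) :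
    Finset (Vt L R Sg k K × Vt L R Sg k K) :=
  ELedges L R Sg k K ∪ ELStars L R σ0 k K ∪ EMedges Eproj π k K ∪
    ERStars L R σ0 k K ∪ ERedges L R Sg k K ∪ EOuter Sg Eproj k K

/-- The vertex set `V = L_Labels ∪ L_Dups ∪ R_Labels ∪ R_Dups ∪ M_Paths` of the directed
spanner instance. -/
def Verts {L R Sg : Type} [Fintype L] [Fintype R] [Fintype Sg]
    [DecidableEq L] [DecidableEq R] [DecidableEq Sg]
    (Eproj : Finset (L × R)) (π : L → R → Sg → Sg) (k K : ℕ) :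
    Finset (Vt L R Sg k K) :=
  (Finset.univ.image fun p : L × Sg => SpV.cLab p.1 p.2) ∪
  (Finset.univ.image fun p : L × Fin (numDup Sg k K) => SpV.cDup p.1 p.2) ∪
  (Finset.univ.image fun p : R × Sg => SpV.xLab p.1 p.2) ∪
  (Finset.univ.image fun p : R × Fin (numDup Sg k K) => SpV.xDup p.1 p.2) ∪
  (Eproj.biUnion fun e => (Finset.univ : Finset Sg).biUnion fun σL =>
    Finset.univ.image fun t : Fin (2 * k - 4) =>
      SpV.mid e.1 e.2 σL (π e.1 e.2 σL) t)

/-- The map `Φ` sending an edge of `E ∖ E_Outer` to the corresponding label set: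
`Φ((c_i^l, c_{i,σ})) = {(c_i, σ)}`, `Φ((x_{j,σ}, x_j^l)) = {(x_j, σ)}`, and `Φ(e) = ∅` for
`e ∈ E_LStars ∪ E_M ∪ E_RStars`. -/
def Phi {L R Sg : Type} [Fintype Sg] {k K : ℕ}
    (e : Vt L R Sg k K × Vt L R Sg k K) : Finset ((L ⊕ R) × Sg) :=
  match e with
  | (Sum.inr (Sum.inl _), Sum.inl (i, σ)) => {(Sum.inl i, σ)}
  | (Sum.inr (Sum.inr (Sum.inl (j, σ))), Sum.inr (Sum.inr (Sum.inr (Sum.inl _)))) =>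
      {(Sum.inr j, σ)}
  | _ => ∅

/-- The fractional solution `y'` built from a solution `y*` of the projection games SDP:
`y'_S = 0` if `S` contains an edge of `E_Outer`, and `y'_S = y*_{Φ(S)}` otherwise
(where `Φ(S) = ⋃_{e ∈ S} Φ(e)`). -/
def yPrime {L R Sg : Type} [Fintype L] [Fintype R] [Fintype Sg]
    [DecidableEq L] [DecidableEq R] [DecidableEq Sg]
    (Eproj : Finset (L × R)) (k K : ℕ) (ystar : Finset ((L ⊕ R) × Sg) → ℝ)
    (S : Finset (Vt L R Sg k K × Vt L R Sg k K)) : ℝ :=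
  if (S ∩ EOuter Sg Eproj k K).Nonempty then 0 else ystar (S.biUnion Phi)

end Spanner
set_option linter.unusedSectionVars false
set_option maxHeartbeats 1000000

namespace SpannerProof

open Spanner

variable {L R Sg : Type} [Fintype L] [Fintype R] [Fintype Sg]
    [DecidableEq L] [DecidableEq R] [DecidableEq Sg]
variable {Eproj : Finset (L × R)} {π : L → R → Sg → Sg} {σ0 : Sg} {k K : ℕ}

lemma pathEdges_get {V : Type} : ∀ (vs : List V) (e : V × V), e ∈ Spanner.pathEdges vs →
    ∃ n, vs[n]? = some e.1 ∧ vs[n+1]? = some e.2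
  | [], e, h => by simp [Spanner.pathEdges] at h
  | [a], e, h => by simp [Spanner.pathEdges] at h
  | a :: b :: t, e, h => by
    rw [Spanner.pathEdges, List.tail_cons, List.zip_cons_cons] at h
    rcases List.mem_cons.1 h with h | h
    · exact ⟨0, by simp [h]⟩
    · obtain ⟨n, h1, h2⟩ := pathEdges_get (b :: t) e h
      exact ⟨n+1, by simpa using h1, by simpa using h2⟩

lemma finRange_getElem? {T s : ℕ} (h : s < T) : (List.finRange T)[s]? = some ⟨s, h⟩ := by
  rw [List.getElem?_eq_getElem (by simpa using h), List.getElem_finRange]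
  rfl

/-- The potential function on the vertices. -/
def phi (k : ℕ) {L R Sg : Type} {D T : ℕ} : SpV L R Sg D T → ℕ
  | Sum.inl _ => 2*k-3
  | Sum.inr (Sum.inr (Sum.inr (Sum.inr (_, _, _, _, t)))) => 2*k-4 - t.1
  | _ => 0

@[simp] lemma phi_cLab {D T : ℕ} (i : L) (σ : Sg) :
    phi k (SpV.cLab i σ : SpV L R Sg D T) = 2*k-3 := rfl
@[simp] lemma phi_cDup {D T : ℕ} (i : L) (l : Fin D) :
    phi k (SpV.cDup i l : SpV L R Sg D T) = 0 := rfl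
@[simp] lemma phi_xLab {D T : ℕ} (j : R) (σ : Sg) :
    phi k (SpV.xLab j σ : SpV L R Sg D T) = 0 := rfl
@[simp] lemma phi_xDup {D T : ℕ} (j : R) (l : Fin D) :
    phi k (SpV.xDup j l : SpV L R Sg D T) = 0 := rfl
@[simp] lemma phi_mid {D T : ℕ} (i : L) (j : R) (σL σR : Sg) (t : Fin T) :
    phi k (SpV.mid i j σL σR t : SpV L R Sg D T) = 2*k-4-t.1 := rfl

lemma EMpath_edge (hk : 2 ≤ k) {i : L} {j : R} {σL σR : Sg}
    {e : Vt L R Sg k K × Vt L R Sg k K} (he : e ∈ EMpath k K i j σL σR) :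
    (e.1 = SpV.cLab i σL ∨ ∃ t, e.1 = SpV.mid i j σL σR t) ∧
    (e.2 = SpV.xLab j σR ∨ ∃ t, e.2 = SpV.mid i j σL σR t) ∧
    phi k e.1 = phi k e.2 + 1 := by
  obtain ⟨n, h1, h2⟩ := pathEdges_get _ e he
  rw [midVerts, List.cons_append] at h1 h2
  rcases n with _ | s
  · rw [List.getElem?_cons_zero] at h1
    have he1 : e.1 = SpV.cLab i σL := by injection h1.symm
    rw [List.getElem?_cons_succ] at h2
    rcases Nat.eq_zero_or_pos (2*k-4) with hT0 | hT0
    · rw [List.finRange_eq_nil_iff.mpr hT0, List.map_nil, List.nil_append,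
        List.getElem?_cons_zero] at h2
      have he2 : e.2 = SpV.xLab j σR := by injection h2.symm
      exact ⟨Or.inl he1, Or.inl he2, by rw [he1, he2, phi_cLab, phi_xLab]; omega⟩
    · rw [List.getElem?_append_left (by simpa using hT0), List.getElem?_map,
        finRange_getElem? hT0, Option.map_some] at h2
      have he2 : e.2 = SpV.mid i j σL σR ⟨0, hT0⟩ := by injection h2.symm
      exact ⟨Or.inl he1, Or.inr ⟨_, he2⟩, by rw [he1, he2]; show 2*k-3 = (2*k-4-0)+1; omega⟩
  · rw [List.getElem?_cons_succ] at h1 h2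
    have hs1 : s + 1 < 2*k-4 + 1 := by
      by_contra hcon
      rw [List.getElem?_eq_none (by simp; omega)] at h2
      simp at h2
    have hsT : s < 2*k-4 := by omega
    rw [List.getElem?_append_left (by simpa using hsT), List.getElem?_map,
      finRange_getElem? hsT, Option.map_some] at h1
    have he1 : e.1 = SpV.mid i j σL σR ⟨s, hsT⟩ := by injection h1.symm
    rcases Nat.lt_or_ge (s+1) (2*k-4) with hlt | hge
    · rw [List.getElem?_append_left (by simpa using hlt), List.getElem?_map,
        finRange_getElem? hlt, Option.map_some] at h2
      have he2 : e.2 = SpV.mid i j σL σR ⟨s+1, hlt⟩ := by injection h2.symm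
      exact ⟨Or.inr ⟨_, he1⟩, Or.inr ⟨_, he2⟩, by rw [he1, he2]; show 2*k-4-s = (2*k-4-(s+1))+1; omega⟩
    · have hsg : s + 1 = 2*k-4 := by omega
      rw [List.getElem?_append_right (by simp; omega)] at h2
      simp only [List.length_map, List.length_finRange, hsg, Nat.sub_self,
        List.getElem?_cons_zero] at h2
      have he2 : e.2 = SpV.xLab j σR := by injection h2.symm
      refine ⟨Or.inr ⟨_, he1⟩, Or.inl he2, ?_⟩
      rw [he1, he2]
      show 2*k-4-s = 0+1
      omega

end SpannerProof

attribute [local simp] SpV.cLab SpV.cDup SpV.xLab SpV.xDup SpV.mid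

namespace SpannerProof

open Spanner

section Graph

variable {L R Sg : Type} [Fintype L] [Fintype R] [Fintype Sg]
    [DecidableEq L] [DecidableEq R] [DecidableEq Sg]
variable {Eproj : Finset (L × R)} {π : L → R → Sg → Sg} {σ0 : Sg} {k K : ℕ}
variable {e : Vt L R Sg k K × Vt L R Sg k K}

lemma mem_ELedges : e ∈ ELedges L R Sg k K ↔
    ∃ i l σ, e = (SpV.cDup i l, SpV.cLab i σ) := by
  simp only [ELedges, Finset.mem_image, Finset.mem_univ, true_and, Prod.exists]
  constructor
  · rintro ⟨i, l, σ, h⟩; exact ⟨i, l, σ, h.symm⟩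
  · rintro ⟨i, l, σ, h⟩; exact ⟨i, l, σ, h.symm⟩

lemma mem_ERedges : e ∈ ERedges L R Sg k K ↔
    ∃ j l σ, e = (SpV.xLab j σ, SpV.xDup j l) := by
  simp only [ERedges, Finset.mem_image, Finset.mem_univ, true_and, Prod.exists]
  constructor
  · rintro ⟨j, l, σ, h⟩; exact ⟨j, l, σ, h.symm⟩
  · rintro ⟨j, l, σ, h⟩; exact ⟨j, l, σ, h.symm⟩

lemma mem_EOuter : e ∈ EOuter Sg Eproj k K ↔
    ∃ i j l, (i, j) ∈ Eproj ∧ e = (SpV.cDup i l, SpV.xDup j l) := by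
  simp only [EOuter, Finset.mem_image, Finset.mem_product, Finset.mem_univ, and_true,
    Prod.exists]
  constructor
  · rintro ⟨i, j, l, hij, h⟩; exact ⟨i, j, l, hij, h.symm⟩
  · rintro ⟨i, j, l, hij, h⟩; exact ⟨i, j, l, hij, h.symm⟩

lemma mem_ELStars_shape (he : e ∈ ELStars L R σ0 k K) :
    ∃ i σ σ', e = (SpV.cLab i σ, SpV.cLab i σ') := by
  simp only [ELStars, Finset.mem_union, Finset.mem_image, Finset.mem_filter,
    Finset.mem_univ, true_and, Prod.exists] at he
  rcases he with ⟨i, σ, -, h⟩ | ⟨i, σ, -, h⟩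
  · exact ⟨i, σ0, σ, h.symm⟩
  · exact ⟨i, σ, σ0, h.symm⟩

lemma mem_ERStars_shape (he : e ∈ ERStars L R σ0 k K) :
    ∃ j σ σ', e = (SpV.xLab j σ, SpV.xLab j σ') := by
  simp only [ERStars, Finset.mem_union, Finset.mem_image, Finset.mem_filter,
    Finset.mem_univ, true_and, Prod.exists] at he
  rcases he with ⟨j, σ, -, h⟩ | ⟨j, σ, -, h⟩
  · exact ⟨j, σ0, σ, h.symm⟩
  · exact ⟨j, σ, σ0, h.symm⟩

lemma mem_EMedges_shape : e ∈ EMedges Eproj π k K ↔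
    ∃ i j σL, (i, j) ∈ Eproj ∧ e ∈ EMpath k K i j σL (π i j σL) := by
  simp only [EMedges, Finset.mem_biUnion, Finset.mem_univ, true_and, List.mem_toFinset,
    Prod.exists]
  constructor
  · rintro ⟨i, j, hij, σL, h⟩; exact ⟨i, j, σL, hij, h⟩
  · rintro ⟨i, j, σL, hij, h⟩; exact ⟨i, j, hij, σL, h⟩

lemma mem_Edges_cases (he : e ∈ Edges Eproj π σ0 k K) :
    e ∈ ELedges L R Sg k K ∨ e ∈ ELStars L R σ0 k K ∨ e ∈ EMedges Eproj π k K ∨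
      e ∈ ERStars L R σ0 k K ∨ e ∈ ERedges L R Sg k K ∨ e ∈ EOuter Sg Eproj k K := by
  simp only [Edges, Finset.mem_union] at he
  tauto

lemma src_ne_xDup (hk : 2 ≤ k) (he : e ∈ Edges Eproj π σ0 k K) (j : R)
    (l : Fin (numDup Sg k K)) : e.1 ≠ SpV.xDup j l := by
  intro h
  rcases mem_Edges_cases he with h1 | h1 | h1 | h1 | h1 | h1
  · obtain ⟨i, l', σ, rfl⟩ := mem_ELedges.1 h1; simp at h
  · obtain ⟨i, σ, σ', rfl⟩ := mem_ELStars_shape h1; simp at h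
  · obtain ⟨i, j', σL, -, hp⟩ := mem_EMedges_shape.1 h1
    rcases (EMpath_edge hk hp).1 with h2 | ⟨t, h2⟩ <;> rw [h2] at h <;> simp at h
  · obtain ⟨j', σ, σ', rfl⟩ := mem_ERStars_shape h1; simp at h
  · obtain ⟨j', l', σ, rfl⟩ := mem_ERedges.1 h1; simp at h
  · obtain ⟨i, j', l', -, rfl⟩ := mem_EOuter.1 h1; simp at h

lemma tgt_ne_cDup (hk : 2 ≤ k) (he : e ∈ Edges Eproj π σ0 k K) (i : L)
    (l : Fin (numDup Sg k K)) : e.2 ≠ SpV.cDup i l := by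
  intro h
  rcases mem_Edges_cases he with h1 | h1 | h1 | h1 | h1 | h1
  · obtain ⟨i', l', σ, rfl⟩ := mem_ELedges.1 h1; simp at h
  · obtain ⟨i', σ, σ', rfl⟩ := mem_ELStars_shape h1; simp at h
  · obtain ⟨i', j', σL, -, hp⟩ := mem_EMedges_shape.1 h1
    rcases (EMpath_edge hk hp).2.1 with h2 | ⟨t, h2⟩ <;> rw [h2] at h <;> simp at h
  · obtain ⟨j', σ, σ', rfl⟩ := mem_ERStars_shape h1; simp at h
  · obtain ⟨j', l', σ, rfl⟩ := mem_ERedges.1 h1; simp at h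
  · obtain ⟨i', j', l', -, rfl⟩ := mem_EOuter.1 h1; simp at h

lemma src_cDup_cases (hk : 2 ≤ k) (he : e ∈ Edges Eproj π σ0 k K) {i : L}
    {l : Fin (numDup Sg k K)} (h : e.1 = SpV.cDup i l) :
    (∃ σ, e = (SpV.cDup i l, SpV.cLab i σ)) ∨
      (∃ j, (i, j) ∈ Eproj ∧ e = (SpV.cDup i l, SpV.xDup j l)) := by
  rcases mem_Edges_cases he with h1 | h1 | h1 | h1 | h1 | h1
  · obtain ⟨i', l', σ, rfl⟩ := mem_ELedges.1 h1
    simp only [SpV.cDup, Sum.inr.injEq, Sum.inl.injEq, Prod.mk.injEq] at h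
    obtain ⟨rfl, rfl⟩ := h
    exact Or.inl ⟨σ, rfl⟩
  · obtain ⟨i', σ, σ', rfl⟩ := mem_ELStars_shape h1; simp at h
  · obtain ⟨i', j', σL, -, hp⟩ := mem_EMedges_shape.1 h1
    rcases (EMpath_edge hk hp).1 with h2 | ⟨t, h2⟩ <;> rw [h2] at h <;> simp at h
  · obtain ⟨j', σ, σ', rfl⟩ := mem_ERStars_shape h1; simp at h
  · obtain ⟨j', l', σ, rfl⟩ := mem_ERedges.1 h1; simp at h
  · obtain ⟨i', j', l', hij, rfl⟩ := mem_EOuter.1 h1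
    simp only [SpV.cDup, Sum.inr.injEq, Sum.inl.injEq, Prod.mk.injEq] at h
    obtain ⟨rfl, rfl⟩ := h
    exact Or.inr ⟨j', hij, rfl⟩

lemma tgt_xDup_cases (hk : 2 ≤ k) (he : e ∈ Edges Eproj π σ0 k K) {j : R}
    {l : Fin (numDup Sg k K)} (h : e.2 = SpV.xDup j l) :
    (∃ σ, e = (SpV.xLab j σ, SpV.xDup j l)) ∨
      (∃ i, (i, j) ∈ Eproj ∧ e = (SpV.cDup i l, SpV.xDup j l)) := by
  rcases mem_Edges_cases he with h1 | h1 | h1 | h1 | h1 | h1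
  · obtain ⟨i', l', σ, rfl⟩ := mem_ELedges.1 h1; simp at h
  · obtain ⟨i', σ, σ', rfl⟩ := mem_ELStars_shape h1; simp at h
  · obtain ⟨i', j', σL, -, hp⟩ := mem_EMedges_shape.1 h1
    rcases (EMpath_edge hk hp).2.1 with h2 | ⟨t, h2⟩ <;> rw [h2] at h <;> simp at h
  · obtain ⟨j', σ, σ', rfl⟩ := mem_ERStars_shape h1; simp at h
  · obtain ⟨j', l', σ, rfl⟩ := mem_ERedges.1 h1
    simp only [SpV.xDup, Sum.inr.injEq, Sum.inl.injEq, Prod.mk.injEq] at h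
    obtain ⟨rfl, rfl⟩ := h
    exact Or.inl ⟨σ, rfl⟩
  · obtain ⟨i', j', l', hij, rfl⟩ := mem_EOuter.1 h1
    simp only [SpV.xDup, Sum.inr.injEq, Sum.inl.injEq, Prod.mk.injEq] at h
    obtain ⟨rfl, rfl⟩ := h
    exact Or.inr ⟨i', hij, rfl⟩

lemma phi_step (hk : 2 ≤ k) (he : e ∈ Edges Eproj π σ0 k K)
    (hsrc : ∀ i l, e.1 ≠ SpV.cDup i l) :
    phi k e.1 ≤ phi k e.2 + 1 ∧
      (phi k e.1 ≠ phi k e.2 → e ∈ EMedges Eproj π k K) := by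
  rcases mem_Edges_cases he with h1 | h1 | h1 | h1 | h1 | h1
  · obtain ⟨i, l, σ, rfl⟩ := mem_ELedges.1 h1; exact absurd rfl (hsrc i l)
  · obtain ⟨i, σ, σ', rfl⟩ := mem_ELStars_shape h1
    exact ⟨by simp only [phi_cLab]; omega, fun hne => absurd (by simp only [phi_cLab]) hne⟩
  · have := (EMpath_edge hk (mem_EMedges_shape.1 h1).choose_spec.choose_spec.choose_spec.2).2.2
    exact ⟨le_of_eq this, fun _ => h1⟩
  · obtain ⟨j, σ, σ', rfl⟩ := mem_ERStars_shape h1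
    exact ⟨by simp only [phi_xLab]; omega, fun hne => absurd (by simp only [phi_xLab]) hne⟩
  · obtain ⟨j, l, σ, rfl⟩ := mem_ERedges.1 h1
    exact ⟨by simp only [phi_xLab, phi_xDup]; omega,
      fun hne => absurd (by simp only [phi_xLab, phi_xDup]) hne⟩
  · obtain ⟨i, j, l, -, rfl⟩ := mem_EOuter.1 h1; exact absurd rfl (hsrc i l)

lemma tele (hk : 2 ≤ k) : ∀ (q : List (Vt L R Sg k K × Vt L R Sg k K)) (e),
    (∀ f ∈ e :: q, f ∈ Edges Eproj π σ0 k K) →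
    List.Chain' (fun a b => a.2 = b.1) (e :: q) →
    (∀ i l, e.1 ≠ SpV.cDup i l) →
    phi k e.1 ≤ phi k ((e :: q).getLast (List.cons_ne_nil e q)).2 + (e :: q).length ∧
      (phi k e.1 = phi k ((e :: q).getLast (List.cons_ne_nil e q)).2 + (e :: q).length →
        ∀ f ∈ e :: q, f ∈ EMedges Eproj π k K)
  | [], e, hS, hch, hsrc => by
    simp only [List.getLast_singleton, List.length_cons, List.length_nil]
    have hst := phi_step hk (hS e (List.mem_cons_self)) hsrc
    refine ⟨by omega, fun hEq f hf => ?_⟩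
    rw [List.mem_singleton] at hf; subst hf
    exact hst.2 (by omega)
  | f :: q, e, hS, hch, hsrc => by
    obtain ⟨hef, hch2⟩ := List.isChain_cons_cons.1 hch
    have hsrc2 : ∀ i l, f.1 ≠ SpV.cDup i l := by
      intro i l hcon; rw [← hef] at hcon
      exact tgt_ne_cDup hk (hS e (List.mem_cons_self)) i l hcon
    have IH := tele hk q f (fun g hg => hS g (List.mem_cons_of_mem e hg)) hch2 hsrc2
    have hstep := phi_step hk (hS e (List.mem_cons_self)) hsrc
    have h1 : phi k e.1 ≤ phi k f.1 + 1 := by rw [← hef]; exact hstep.1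
    rw [List.getLast_cons (List.cons_ne_nil f q)]
    have hIH1 := IH.1
    simp only [List.length_cons] at *
    refine ⟨by omega, fun hEq g hg => ?_⟩
    rcases List.mem_cons.1 hg with rfl | hg
    · exact hstep.2 (by rw [hef]; omega)
    · exact IH.2 (by omega) g hg

def Compat (π : L → R → Sg → Sg) (k K : ℕ) (i : L) (σ : Sg) (v : Vt L R Sg k K) : Prop :=
  v = SpV.cLab i σ ∨ (∃ j t, v = SpV.mid i j σ (π i j σ) t) ∨ ∃ j, v = SpV.xLab j (π i j σ)

lemma compat_step (hk : 2 ≤ k) (he : e ∈ EMedges Eproj π k K) {i : L} {σ : Sg}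
    (hc : Compat π k K i σ e.1) : Compat π k K i σ e.2 := by
  obtain ⟨i', j', σL, hij, hpath⟩ := mem_EMedges_shape.1 he
  obtain ⟨hsrc, htgt, -⟩ := EMpath_edge hk hpath
  have hiσ : i' = i ∧ σL = σ := by
    rcases hc with h | ⟨j, t, h⟩ | ⟨j, h⟩
    · rcases hsrc with h2 | ⟨t, h2⟩
      · rw [h] at h2
        simp only [SpV.cLab, Sum.inl.injEq, Prod.mk.injEq] at h2
        exact ⟨h2.1.symm, h2.2.symm⟩
      · rw [h] at h2; simp at h2
    · rcases hsrc with h2 | ⟨t2, h2⟩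
      · rw [h] at h2; simp at h2
      · rw [h] at h2
        simp only [SpV.mid, Sum.inr.injEq, Prod.mk.injEq] at h2
        exact ⟨h2.1.symm, h2.2.2.1.symm⟩
    · rcases hsrc with h2 | ⟨t2, h2⟩ <;> rw [h] at h2 <;> simp at h2
  obtain ⟨rfl, rfl⟩ := hiσ
  rcases htgt with h2 | ⟨t, h2⟩
  · exact Or.inr (Or.inr ⟨j', h2⟩)
  · exact Or.inr (Or.inl ⟨j', t, h2⟩)

lemma compat_chain (hk : 2 ≤ k) {i : L} {σ : Sg} :
    ∀ (q : List (Vt L R Sg k K × Vt L R Sg k K)) (e),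
    (∀ f ∈ e :: q, f ∈ EMedges Eproj π k K) →
    List.Chain' (fun a b => a.2 = b.1) (e :: q) →
    Compat π k K i σ e.1 →
    Compat π k K i σ ((e :: q).getLast (List.cons_ne_nil e q)).2
  | [], e, hS, hch, hc => by
    simp only [List.getLast_singleton]
    exact compat_step hk (hS e (List.mem_cons_self)) hc
  | f :: q, e, hS, hch, hc => by
    obtain ⟨hef, hch2⟩ := List.isChain_cons_cons.1 hch
    have hc2 : Compat π k K i σ f.1 := by
      rw [← hef]; exact compat_step hk (hS e (List.mem_cons_self)) hc
    rw [List.getLast_cons (List.cons_ne_nil f q)]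
    exact compat_chain hk q f (fun g hg => hS g (List.mem_cons_of_mem e hg)) hch2 hc2

lemma inner_path (hk : 2 ≤ k) {q : List (Vt L R Sg k K × Vt L R Sg k K)} {e}
    (hS : ∀ f ∈ e :: q, f ∈ Edges Eproj π σ0 k K)
    (hch : List.Chain' (fun a b => a.2 = b.1) (e :: q)) {i : L} {σ : Sg} {j : R} {τ : Sg}
    (hhd : e.1 = SpV.cLab i σ)
    (hlast : ((e :: q).getLast (List.cons_ne_nil e q)).2 = SpV.xLab j τ)
    (hlen : (e :: q).length ≤ 2*k-3) : τ = π i j σ := by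
  have hsrc : ∀ i' l', e.1 ≠ SpV.cDup i' l' := by rw [hhd]; intro i' l'; simp
  have ht := tele hk q e hS hch hsrc
  rw [hhd, hlast] at ht
  simp only [phi_cLab, phi_xLab, zero_add] at ht
  have hlenq : (e :: q).length = 2*k-3 := le_antisymm hlen (ht.1)
  have hEM := ht.2 (by omega)
  have hcomp := compat_chain hk q e hEM hch (Or.inl hhd)
  rw [hlast] at hcomp
  rcases hcomp with h | ⟨j', t, h⟩ | ⟨j', h⟩
  · simp at h
  · simp at h
  · simp only [SpV.xLab, Sum.inr.injEq, Sum.inl.injEq, Prod.mk.injEq] at h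
    obtain ⟨rfl, rfl⟩ := h
    rfl

end Graph

end SpannerProof

namespace SpannerProof

open Spanner

section Dissect

variable {L R Sg : Type} [Fintype L] [Fintype R] [Fintype Sg]
    [DecidableEq L] [DecidableEq R] [DecidableEq Sg]
variable {Eproj : Finset (L × R)} {π : L → R → Sg → Sg} {σ0 : Sg} {k K : ℕ}
variable {S : Finset (Vt L R Sg k K × Vt L R Sg k K)}

lemma first_edge (hk : 2 ≤ k) (hS : S ⊆ Edges Eproj π σ0 k K) {i : L}
    {l : Fin (numDup Sg k K)} {v : Vt L R Sg k K} {p}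
    (hp : IsDirPath S (SpV.cDup i l) v p) :
    (∃ σ, (SpV.cDup i l, SpV.cLab i σ) ∈ S) ∨ (SpV.cDup i l, v) ∈ S := by
  obtain ⟨hne, hmem, hhd, hlast, hch, -⟩ := hp
  obtain ⟨e, q, rfl⟩ := List.exists_cons_of_ne_nil hne
  rw [List.head?_cons, Option.map_some, Option.some.injEq] at hhd
  cases q with
  | nil =>
    right
    rw [List.getLast?_singleton, Option.map_some, Option.some.injEq] at hlast
    have : (SpV.cDup i l, v) = e := by rw [← hhd, ← hlast]
    rw [this]
    exact hmem e (List.mem_cons_self)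
  | cons f q' =>
    have heE := hS (hmem e (List.mem_cons_self))
    rcases src_cDup_cases hk heE hhd with ⟨σ, he⟩ | ⟨j', hj', he⟩
    · exact Or.inl ⟨σ, he ▸ hmem e (List.mem_cons_self)⟩
    · exfalso
      obtain ⟨hef, -⟩ := List.isChain_cons_cons.1 hch
      have hf1 : f.1 = SpV.xDup j' l := by rw [← hef, he]
      exact src_ne_xDup hk (hS (hmem f (List.mem_cons_of_mem e (List.mem_cons_self))))
        j' l hf1

lemma last_edge (hk : 2 ≤ k) (hS : S ⊆ Edges Eproj π σ0 k K) {j : R}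
    {l : Fin (numDup Sg k K)} {u : Vt L R Sg k K} {p}
    (hp : IsDirPath S u (SpV.xDup j l) p) :
    (∃ σ, (SpV.xLab j σ, SpV.xDup j l) ∈ S) ∨
      ((u, SpV.xDup j l) ∈ S ∧ ∃ i', u = SpV.cDup i' l) := by
  obtain ⟨hne, hmem, hhd, hlast, hch, -⟩ := hp
  rcases List.eq_nil_or_concat p with rfl | ⟨q, g, rfl⟩
  · exact absurd rfl hne
  simp only [List.concat_eq_append] at hne hmem hhd hlast hch
  rw [List.getLast?_concat, Option.map_some, Option.some.injEq] at hlast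
  have hgE := hS (hmem g (List.mem_append_right q (List.mem_cons_self)))
  rcases tgt_xDup_cases hk hgE hlast with ⟨σ, hg⟩ | ⟨i', hij, hg⟩
  · exact Or.inl ⟨σ, hg ▸ hmem g (List.mem_append_right q (List.mem_cons_self))⟩
  · cases q with
    | nil =>
      rw [List.nil_append, List.head?_cons, Option.map_some, Option.some.injEq] at hhd
      right
      constructor
      · have : (u, SpV.xDup j l) = g := by rw [← hhd, ← hlast]
        rw [this]
        exact hmem g (List.mem_cons_self)
      · exact ⟨i', by rw [← hhd, hg]⟩
    | cons f q' =>
      exfalso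
      obtain ⟨-, -, hrel⟩ := List.isChain_append.1 hch
      have hpred := hrel ((f :: q').getLast (List.cons_ne_nil f q'))
        (by rw [List.getLast?_eq_getLast (List.cons_ne_nil f q')]; rfl) g (by simp)
      have : ((f :: q').getLast (List.cons_ne_nil f q')).2 = SpV.cDup i' l := by
        rw [hpred, hg]
      exact tgt_ne_cDup hk
        (hS (hmem _ (List.mem_append_left [g] (List.getLast_mem (List.cons_ne_nil f q')))))
        i' l this

lemma outer_dissect (hk : 2 ≤ k) (hS : S ⊆ Edges Eproj π σ0 k K) {i : L} {j : R}
    {l : Fin (numDup Sg k K)} {p}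
    (hp : IsDirPath S (SpV.cDup i l) (SpV.xDup j l) p) (hlen : p.length ≤ 2*k-1) :
    (SpV.cDup i l, SpV.xDup j l) ∈ S ∨
      ∃ σ, (SpV.cDup i l, SpV.cLab i σ) ∈ S ∧ (SpV.xLab j (π i j σ), SpV.xDup j l) ∈ S := by
  obtain ⟨hne, hmem, hhd, hlast, hch, -⟩ := hp
  obtain ⟨e, q, rfl⟩ := List.exists_cons_of_ne_nil hne
  rw [List.head?_cons, Option.map_some, Option.some.injEq] at hhd
  cases q with
  | nil =>
    left
    rw [List.getLast?_singleton, Option.map_some, Option.some.injEq] at hlast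
    have : (SpV.cDup i l, SpV.xDup j l) = e := by rw [← hhd, ← hlast]
    rw [this]
    exact hmem e (List.mem_cons_self)
  | cons f0 q0 =>
    -- first edge
    have heE := hS (hmem e (List.mem_cons_self))
    obtain ⟨hef, hch2⟩ := List.isChain_cons_cons.1 hch
    rcases src_cDup_cases hk heE hhd with ⟨σ1, he⟩ | ⟨j', hj', he⟩
    swap
    · exfalso
      have hf1 : f0.1 = SpV.xDup j' l := by rw [← hef, he]
      exact src_ne_xDup hk (hS (hmem f0 (List.mem_cons_of_mem e (List.mem_cons_self))))
        j' l hf1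
    -- last edge
    rcases List.eq_nil_or_concat (f0 :: q0) with habs | ⟨q', g, hq⟩
    · exact absurd habs (List.cons_ne_nil f0 q0)
    rw [List.concat_eq_append] at hq
    rw [hq] at hlast hch hch2 hmem hlen
    rw [show e :: (q' ++ [g]) = (e :: q') ++ [g] from rfl, List.getLast?_concat,
      Option.map_some, Option.some.injEq] at hlast
    have hgmem := hmem g (by simp)
    have hgE := hS hgmem
    rcases tgt_xDup_cases hk hgE hlast with ⟨σ2, hg⟩ | ⟨i'', hij'', hg⟩
    swap
    · exfalso
      obtain ⟨-, -, hrel⟩ := List.isChain_append.1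
        (show List.Chain' (fun a b => a.2 = b.1) ((e :: q') ++ [g]) from hch)
      have hpred := hrel ((e :: q').getLast (List.cons_ne_nil e q'))
        (by rw [List.getLast?_eq_getLast (List.cons_ne_nil e q')]; rfl) g (by simp)
      have : ((e :: q').getLast (List.cons_ne_nil e q')).2 = SpV.cDup i'' l := by
        rw [hpred, hg]
      exact tgt_ne_cDup hk
        (hS (hmem _ (by
          have := List.getLast_mem (List.cons_ne_nil e q')
          rcases List.mem_cons.1 this with h | h
          · exact List.mem_cons.2 (Or.inl h)
          · exact List.mem_cons.2 (Or.inr (List.mem_append_left [g] h)))))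
        i'' l this
    -- inner part
    cases q' with
    | nil =>
      exfalso
      rw [List.nil_append] at hq
      injection hq with h1 h2
      subst h1
      rw [he, hg] at hef
      simp at hef
    | cons f1 q1 =>
      right
      rw [List.cons_append] at hq
      injection hq with h1 h2
      have hinner_mem : ∀ x ∈ f1 :: q1, x ∈ Edges Eproj π σ0 k K := by
        intro x hx
        exact hS (hmem x (List.mem_cons_of_mem e (List.mem_append_left [g] hx)))
      obtain ⟨hchI, -, hrel⟩ := List.isChain_append.1
        (show List.Chain' (fun a b => a.2 = b.1) (((f1 :: q1)) ++ [g]) from hch2)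
      have hf1 : f1.1 = SpV.cLab i σ1 := by
        rw [← h1, ← hef, he]
      have hlastI : ((f1 :: q1).getLast (List.cons_ne_nil f1 q1)).2 = SpV.xLab j σ2 := by
        have := hrel ((f1 :: q1).getLast (List.cons_ne_nil f1 q1))
          (by rw [List.getLast?_eq_getLast (List.cons_ne_nil f1 q1)]; rfl) g (by simp)
        rw [this, hg]
      have hlenI : (f1 :: q1).length ≤ 2*k-3 := by
        simp only [List.length_cons, List.length_append, List.length_cons,
          List.length_nil] at hlen ⊢
        omega
      have hσ2 := inner_path hk hinner_mem hchI hf1 hlastI hlenI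
      refine ⟨σ1, he ▸ hmem e (List.mem_cons_self), ?_⟩
      rw [← hσ2]
      exact hg ▸ hgmem

end Dissect

end SpannerProof

namespace SpannerProof

section PerL

variable {L R Sg : Type} [Fintype L] [Fintype R] [Fintype Sg]
    [DecidableEq L] [DecidableEq R] [DecidableEq Sg]

lemma perL (Eproj : Finset (L × R)) (π : L → R → Sg → Sg) (K : ℕ) (hK : 1 ≤ K)
    (hdeg : ∀ i : L, (Eproj.filter fun e => e.1 = i).card = K)
    (ha : 1 ≤ (Fintype.card L : ℝ) / (Fintype.card R : ℝ))
    (hdegR : ∀ j : R, ((Eproj.filter fun e => e.2 = j).card : ℝ) ≤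
      2 * K * ((Fintype.card L : ℝ) / (Fintype.card R : ℝ)))
    (hsound : ∀ α : (L ⊕ R) → Sg,
      ((Eproj.filter fun e => π e.1 e.2 (α (Sum.inl e.1)) = α (Sum.inr e.2)).card : ℝ) <
        (Fintype.card L : ℝ) * ((Fintype.card L : ℝ) / (Fintype.card R : ℝ)) / 576)
    (A : L → Finset Sg) (B : R → Finset Sg) (O : Finset (L × R))
    (hA : ∀ i, (A i).Nonempty) (hB : ∀ j, (B j).Nonempty)
    (hcov : ∀ e ∈ Eproj, e ∈ O ∨ ∃ σ ∈ A e.1, π e.1 e.2 σ ∈ B e.2) :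
    (Fintype.card R : ℝ) * Real.sqrt K ≤
      (O.card : ℝ) + (∑ i, ((A i).card : ℝ)) + ∑ j, ((B j).card : ℝ) := by
  by_contra hT
  push_neg at hT
  set m : ℝ := (Fintype.card L : ℝ) with hmdef
  set n : ℝ := (Fintype.card R : ℝ) with hndef
  set a : ℝ := m / n with hadef
  set s : ℝ := Real.sqrt K with hsdef
  have hs0 : 0 ≤ s := Real.sqrt_nonneg _
  have hsK : s * s = (K : ℝ) := Real.mul_self_sqrt (by positivity)
  have hn0 : (0:ℝ) < n := by
    rcases Nat.eq_zero_or_pos (Fintype.card R) with h | h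
    · rw [hndef] at hadef
      rw [h] at hadef
      rw [hadef] at ha
      norm_num at ha
    · rw [hndef]; exact_mod_cast h
  have hm : m = n * a := by rw [hadef]; field_simp
  have ha1 : (1:ℝ) ≤ a := ha
  have ha0 : (0:ℝ) < a := by linarith
  have hmn : n ≤ m := by
    have := mul_le_mul_of_nonneg_left ha1 hn0.le
    rw [mul_one] at this
    linarith only [this, hm]
  have hm0 : (0:ℝ) < m := lt_of_lt_of_le hn0 hmn
  have hK0 : (0:ℝ) < (K:ℝ) := by exact_mod_cast hK
  have hsumA : m ≤ ∑ i, ((A i).card : ℝ) := by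
    have h1 : ∀ i : L, (1:ℝ) ≤ ((A i).card : ℝ) := by
      intro i; exact_mod_cast Finset.card_pos.mpr (hA i)
    calc m = ∑ _i : L, (1:ℝ) := by rw [hmdef]; simp
    _ ≤ _ := Finset.sum_le_sum (fun i _ => h1 i)
  have hsumB : n ≤ ∑ j, ((B j).card : ℝ) := by
    have h1 : ∀ j : R, (1:ℝ) ≤ ((B j).card : ℝ) := by
      intro j; exact_mod_cast Finset.card_pos.mpr (hB j)
    calc n = ∑ _j : R, (1:ℝ) := by rw [hndef]; simp
    _ ≤ _ := Finset.sum_le_sum (fun j _ => h1 j)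
  have hO0 : (0:ℝ) ≤ (O.card : ℝ) := Nat.cast_nonneg _
  have hsa : a + 1 < s := by
    have h1 : n * (a + 1) < n * s := by
      have h2 : n * (a + 1) = m + n := by rw [hm]; ring
      linarith only [hT, hsumA, hsumB, hO0, h2]
    exact lt_of_mul_lt_mul_left h1 hn0.le
  have hs2 : (2:ℝ) < s := by linarith
  set τA : ℝ := 6 * s / a with hτA
  set τB : ℝ := 12 * s with hτB
  have hτA0 : (0:ℝ) < τA := by rw [hτA]; positivity
  have hτB0 : (0:ℝ) < τB := by rw [hτB]; positivity
  set badA := Finset.univ.filter (fun i => τA < ((A i).card : ℝ)) with hbadAdef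
  set badB := Finset.univ.filter (fun j => τB < ((B j).card : ℝ)) with hbadBdef
  have hSA_lt : ∑ i, ((A i).card : ℝ) < n * s := by linarith
  have hSB_lt : ∑ j, ((B j).card : ℝ) < n * s := by linarith
  have hbadAcard : (badA.card : ℝ) * τA ≤ ∑ i, ((A i).card : ℝ) := by
    calc (badA.card : ℝ) * τA = ∑ _i ∈ badA, τA := by rw [Finset.sum_const, nsmul_eq_mul]
    _ ≤ ∑ i ∈ badA, ((A i).card : ℝ) :=
      Finset.sum_le_sum (fun i hi => le_of_lt (Finset.mem_filter.1 hi).2)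
    _ ≤ ∑ i, ((A i).card : ℝ) :=
      Finset.sum_le_sum_of_subset_of_nonneg (Finset.subset_univ _)
        (fun i _ _ => Nat.cast_nonneg _)
  have hbadBcard : (badB.card : ℝ) * τB ≤ ∑ j, ((B j).card : ℝ) := by
    calc (badB.card : ℝ) * τB = ∑ _j ∈ badB, τB := by rw [Finset.sum_const, nsmul_eq_mul]
    _ ≤ ∑ j ∈ badB, ((B j).card : ℝ) :=
      Finset.sum_le_sum (fun j hj => le_of_lt (Finset.mem_filter.1 hj).2)
    _ ≤ ∑ j, ((B j).card : ℝ) :=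
      Finset.sum_le_sum_of_subset_of_nonneg (Finset.subset_univ _)
        (fun j _ _ => Nat.cast_nonneg _)
  have hbadA_lt : (badA.card : ℝ) < m / 6 := by
    have h1 : (badA.card : ℝ) * τA < n * s := lt_of_le_of_lt hbadAcard hSA_lt
    rw [hτA] at h1
    have h2 : (badA.card : ℝ) * (6 * s) < n * s * a := by
      rw [← mul_div_assoc] at h1
      exact (div_lt_iff₀ ha0).1 h1
    have h3 : (badA.card : ℝ) * 6 < n * a := by
      by_contra hcon
      push_neg at hcon
      have := mul_le_mul_of_nonneg_right hcon (by linarith only [hs2] : (0:ℝ) ≤ s)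
      linarith only [h2, this]
    rw [← hm] at h3
    linarith only [h3]
  have hbadB_lt : (badB.card : ℝ) < n / 12 := by
    have h1 : (badB.card : ℝ) * τB < n * s := lt_of_le_of_lt hbadBcard hSB_lt
    rw [hτB] at h1
    have h3 : (badB.card : ℝ) * 12 < n := by
      by_contra hcon
      push_neg at hcon
      have := mul_le_mul_of_nonneg_right hcon (by linarith only [hs2] : (0:ℝ) ≤ s)
      linarith only [h1, this]
    linarith only [h3]
  classical
  set Good := Eproj.filter
    (fun e => e ∉ O ∧ ((A e.1).card : ℝ) ≤ τA ∧ ((B e.2).card : ℝ) ≤ τB) with hGooddef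
  have hEcard : (Eproj.card : ℝ) = m * K := by
    have h1 : Eproj.card = ∑ i : L, (Eproj.filter fun e => e.1 = i).card :=
      Finset.card_eq_sum_card_fiberwise (fun x _ => Finset.mem_univ x.1)
    rw [h1]
    simp only [hdeg, Finset.sum_const, smul_eq_mul, Finset.card_univ, hmdef]
    push_cast
    ring
  have hsub : Eproj ⊆ ((Good ∪ O) ∪ Eproj.filter (fun e => e.1 ∈ badA)) ∪
      Eproj.filter (fun e => e.2 ∈ badB) := by
    intro e he
    simp only [Finset.mem_union, Finset.mem_filter]
    by_cases h1 : e ∈ O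
    · exact Or.inl (Or.inl (Or.inr h1))
    by_cases h2 : ((A e.1).card : ℝ) ≤ τA
    · by_cases h3 : ((B e.2).card : ℝ) ≤ τB
      · exact Or.inl (Or.inl (Or.inl (Finset.mem_filter.2 ⟨he, h1, h2, h3⟩)))
      · push_neg at h3
        exact Or.inr ⟨he, Finset.mem_filter.2 ⟨Finset.mem_univ _, h3⟩⟩
    · push_neg at h2
      exact Or.inl (Or.inr ⟨he, Finset.mem_filter.2 ⟨Finset.mem_univ _, h2⟩⟩)
  have hcard1 : ((Eproj.filter (fun e => e.1 ∈ badA)).card : ℝ) ≤ (badA.card : ℝ) * K := by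
    have hsub1 : Eproj.filter (fun e => e.1 ∈ badA) ⊆
        badA.biUnion (fun i => Eproj.filter (fun e => e.1 = i)) := by
      intro e he
      simp only [Finset.mem_filter, Finset.mem_biUnion] at *
      exact ⟨e.1, he.2, he.1, rfl⟩
    calc ((Eproj.filter (fun e => e.1 ∈ badA)).card : ℝ)
        ≤ ((badA.biUnion (fun i => Eproj.filter (fun e => e.1 = i))).card : ℝ) := by
          exact_mod_cast Finset.card_le_card hsub1
    _ ≤ ∑ i ∈ badA, ((Eproj.filter (fun e => e.1 = i)).card : ℝ) := by
          exact_mod_cast Finset.card_biUnion_le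
    _ = (badA.card : ℝ) * K := by
          simp only [hdeg, Finset.sum_const, nsmul_eq_mul]
  have hcard2 : ((Eproj.filter (fun e => e.2 ∈ badB)).card : ℝ) ≤
      (badB.card : ℝ) * (2 * K * a) := by
    have hsub2 : Eproj.filter (fun e => e.2 ∈ badB) ⊆
        badB.biUnion (fun j => Eproj.filter (fun e => e.2 = j)) := by
      intro e he
      simp only [Finset.mem_filter, Finset.mem_biUnion] at *
      exact ⟨e.2, he.2, he.1, rfl⟩
    calc ((Eproj.filter (fun e => e.2 ∈ badB)).card : ℝ)
        ≤ ((badB.biUnion (fun j => Eproj.filter (fun e => e.2 = j))).card : ℝ) := by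
          exact_mod_cast Finset.card_le_card hsub2
    _ ≤ ∑ j ∈ badB, ((Eproj.filter (fun e => e.2 = j)).card : ℝ) := by
          push_cast
          exact_mod_cast Finset.card_biUnion_le
    _ ≤ ∑ _j ∈ badB, 2 * (K:ℝ) * a := Finset.sum_le_sum (fun j _ => hdegR j)
    _ = (badB.card : ℝ) * (2 * K * a) := by rw [Finset.sum_const, nsmul_eq_mul]
  have hO_lt : (O.card : ℝ) < n * s := by linarith
  have hns : n * s ≤ m * K / 2 := by
    have hsK2 : s ≤ (K:ℝ)/2 := by
      have hpos : (0:ℝ) < s * (s - 2) :=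
        mul_pos (by linarith only [hs2]) (by linarith only [hs2])
      nlinarith only [hsK, hpos]
    calc n * s ≤ m * s := mul_le_mul_of_nonneg_right hmn hs0
    _ ≤ m * ((K:ℝ)/2) := mul_le_mul_of_nonneg_left hsK2 hm0.le
    _ = m * K / 2 := by ring
  have hGood_lb : m * K / 6 ≤ (Good.card : ℝ) := by
    have hle : (Eproj.card : ℝ) ≤ (Good.card : ℝ) + (O.card : ℝ) +
        ((Eproj.filter (fun e => e.1 ∈ badA)).card : ℝ) +
        ((Eproj.filter (fun e => e.2 ∈ badB)).card : ℝ) := by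
      have h1 := Finset.card_le_card hsub
      have h2 := Finset.card_union_le ((Good ∪ O) ∪ Eproj.filter (fun e => e.1 ∈ badA))
        (Eproj.filter (fun e => e.2 ∈ badB))
      have h3 := Finset.card_union_le (Good ∪ O) (Eproj.filter (fun e => e.1 ∈ badA))
      have h4 := Finset.card_union_le Good O
      have h5 : Eproj.card ≤ Good.card + O.card +
          (Eproj.filter (fun e => e.1 ∈ badA)).card +
          (Eproj.filter (fun e => e.2 ∈ badB)).card := by omega
      exact_mod_cast h5
    rw [hEcard] at hle
    have hc1' : ((Eproj.filter (fun e => e.1 ∈ badA)).card : ℝ) < m / 6 * K :=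
      lt_of_le_of_lt hcard1 (mul_lt_mul_of_pos_right hbadA_lt hK0)
    have hc2' : ((Eproj.filter (fun e => e.2 ∈ badB)).card : ℝ) < n / 12 * (2 * K * a) :=
      lt_of_le_of_lt hcard2 (mul_lt_mul_of_pos_right hbadB_lt (by positivity))
    have heq : n / 12 * (2 * (K:ℝ) * a) = m * K / 6 := by rw [hm]; ring
    linarith only [hle, hO_lt, hns, hc1', hc2', heq]
  -- averaging over assignments
  set F : (L ⊕ R) → Finset Sg := Sum.elim A B with hF
  set AS := Fintype.piFinset F with hASdef
  have hAScard : AS.card = ∏ v, (F v).card := Fintype.card_piFinset F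
  have hASpos : 0 < (AS.card : ℝ) := by
    rw [hAScard]
    have : 0 < ∏ v, (F v).card := by
      apply Finset.prod_pos
      intro v _
      cases v with
      | inl i => exact Finset.card_pos.2 (hA i)
      | inr j => exact Finset.card_pos.2 (hB j)
    exact_mod_cast this
  have hkey : ∀ e ∈ Good, (AS.card : ℝ) ≤ τA * τB *
      ((AS.filter fun α => π e.1 e.2 (α (Sum.inl e.1)) = α (Sum.inr e.2)).card : ℝ) := by
    intro e he
    rw [hGooddef, Finset.mem_filter] at he
    obtain ⟨heE, heO, hAle, hBle⟩ := he
    obtain ⟨σe, hσA, hσB⟩ := (hcov e heE).resolve_left heO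
    set F' : (L ⊕ R) → Finset Sg :=
      Function.update (Function.update F (Sum.inl e.1) {σe}) (Sum.inr e.2)
        {π e.1 e.2 σe} with hF'
    have hne : (Sum.inl e.1 : L ⊕ R) ≠ Sum.inr e.2 := Sum.inl_ne_inr
    have hsubset : Fintype.piFinset F' ⊆
        AS.filter (fun α => π e.1 e.2 (α (Sum.inl e.1)) = α (Sum.inr e.2)) := by
      intro α hα
      rw [Fintype.mem_piFinset] at hα
      have h1 : α (Sum.inl e.1) = σe := by
        have h := hα (Sum.inl e.1)
        rw [hF', Function.update_of_ne hne, Function.update_self] at h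
        simpa using h
      have h2 : α (Sum.inr e.2) = π e.1 e.2 σe := by
        have h := hα (Sum.inr e.2)
        rw [hF', Function.update_self] at h
        simpa using h
      rw [Finset.mem_filter]
      refine ⟨?_, by rw [h1, h2]⟩
      rw [hASdef, Fintype.mem_piFinset]
      intro v
      by_cases hv2 : v = Sum.inr e.2
      · subst hv2; rw [h2]; exact hσB
      by_cases hv1 : v = Sum.inl e.1
      · subst hv1; rw [h1]; exact hσA
      · have h := hα v
        rw [hF', Function.update_of_ne hv2, Function.update_of_ne hv1] at h
        exact h
    have hcards : ∀ v, (F' v).card =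
        Function.update (Function.update (fun v => (F v).card) (Sum.inl e.1) 1)
          (Sum.inr e.2) 1 v := by
      intro v
      rw [hF']
      by_cases hv2 : v = Sum.inr e.2
      · subst hv2
        rw [Function.update_self, Function.update_self, Finset.card_singleton]
      · rw [Function.update_of_ne hv2, Function.update_of_ne hv2]
        by_cases hv1 : v = Sum.inl e.1
        · subst hv1
          rw [Function.update_self, Function.update_self, Finset.card_singleton]
        · rw [Function.update_of_ne hv1, Function.update_of_ne hv1]
    have hprodeq : (Fintype.piFinset F').card * (A e.1).card * (B e.2).card = AS.card := by
      rw [hAScard, Fintype.card_piFinset]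
      rw [Finset.prod_congr rfl (fun v _ => hcards v)]
      rw [Finset.prod_update_of_mem (Finset.mem_univ (Sum.inr e.2 : L ⊕ R))]
      rw [Finset.prod_update_of_mem
        (Finset.mem_sdiff.2 ⟨Finset.mem_univ _, by simp [hne]⟩)]
      rw [one_mul, one_mul]
      conv_rhs => rw [Finset.prod_eq_prod_diff_singleton_mul
        (Finset.mem_univ (Sum.inr e.2 : L ⊕ R)) (fun v => (F v).card)]
      conv_rhs => rw [Finset.prod_eq_prod_diff_singleton_mul
        (Finset.mem_sdiff.2 ⟨Finset.mem_univ (Sum.inl e.1 : L ⊕ R), by simp [hne]⟩)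
        (fun v => (F v).card)]
      simp only [hF, Sum.elim_inl, Sum.elim_inr]
      try ring
    have hc' : ((Fintype.piFinset F').card : ℝ) ≤
        ((AS.filter fun α => π e.1 e.2 (α (Sum.inl e.1)) = α (Sum.inr e.2)).card : ℝ) := by
      exact_mod_cast Finset.card_le_card hsubset
    have hstep1 : ((Fintype.piFinset F').card : ℝ) * ((A e.1).card : ℝ) ≤
        ((AS.filter fun α => π e.1 e.2 (α (Sum.inl e.1)) = α (Sum.inr e.2)).card : ℝ) * τA :=
      mul_le_mul hc' hAle (Nat.cast_nonneg _) (Nat.cast_nonneg _)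
    have hstep2 : ((Fintype.piFinset F').card : ℝ) * ((A e.1).card : ℝ) * ((B e.2).card : ℝ) ≤
        ((AS.filter fun α => π e.1 e.2 (α (Sum.inl e.1)) = α (Sum.inr e.2)).card : ℝ) * τA * τB :=
      mul_le_mul hstep1 hBle (Nat.cast_nonneg _)
        (mul_nonneg (Nat.cast_nonneg _) hτA0.le)
    calc (AS.card : ℝ) = ((Fintype.piFinset F').card : ℝ) * ((A e.1).card : ℝ) *
          ((B e.2).card : ℝ) := by exact_mod_cast hprodeq.symm
    _ ≤ _ := hstep2
    _ = τA * τB * _ := by ring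
  have hswapN : ∑ e ∈ Good, (AS.filter fun α =>
        π e.1 e.2 (α (Sum.inl e.1)) = α (Sum.inr e.2)).card
      = ∑ α ∈ AS, (Good.filter fun e =>
        π e.1 e.2 (α (Sum.inl e.1)) = α (Sum.inr e.2)).card := by
    simp_rw [Finset.card_filter]
    rw [Finset.sum_comm]
  have hGsub : ∀ α : (L ⊕ R) → Sg,
      ((Good.filter fun e => π e.1 e.2 (α (Sum.inl e.1)) = α (Sum.inr e.2)).card : ℝ) ≤
      ((Eproj.filter fun e => π e.1 e.2 (α (Sum.inl e.1)) = α (Sum.inr e.2)).card : ℝ) := by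
    intro α
    exact_mod_cast Finset.card_le_card
      (Finset.filter_subset_filter _ (Finset.filter_subset _ _))
  have hASne : AS.Nonempty := Finset.card_pos.1 (by exact_mod_cast hASpos)
  have hstrict : ∑ α ∈ AS, ((Eproj.filter fun e =>
        π e.1 e.2 (α (Sum.inl e.1)) = α (Sum.inr e.2)).card : ℝ) <
      (AS.card : ℝ) * (m * a / 576) := by
    calc ∑ α ∈ AS, ((Eproj.filter fun e =>
          π e.1 e.2 (α (Sum.inl e.1)) = α (Sum.inr e.2)).card : ℝ)
        < ∑ _α ∈ AS, (m * a / 576) :=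
          Finset.sum_lt_sum_of_nonempty hASne (fun α _ => hsound α)
    _ = (AS.card : ℝ) * (m * a / 576) := by rw [Finset.sum_const, nsmul_eq_mul]
  have hlow : (Good.card : ℝ) * (AS.card : ℝ) ≤ τA * τB *
      ∑ α ∈ AS, ((Eproj.filter fun e =>
        π e.1 e.2 (α (Sum.inl e.1)) = α (Sum.inr e.2)).card : ℝ) := by
    have h1 : (Good.card : ℝ) * (AS.card : ℝ) ≤
        ∑ e ∈ Good, τA * τB * ((AS.filter fun α =>
          π e.1 e.2 (α (Sum.inl e.1)) = α (Sum.inr e.2)).card : ℝ) := by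
      calc (Good.card : ℝ) * (AS.card : ℝ) = ∑ _e ∈ Good, (AS.card : ℝ) := by
            rw [Finset.sum_const, nsmul_eq_mul]
      _ ≤ _ := Finset.sum_le_sum hkey
    have h2 : ∑ e ∈ Good, ((AS.filter fun α =>
          π e.1 e.2 (α (Sum.inl e.1)) = α (Sum.inr e.2)).card : ℝ) ≤
        ∑ α ∈ AS, ((Eproj.filter fun e =>
          π e.1 e.2 (α (Sum.inl e.1)) = α (Sum.inr e.2)).card : ℝ) := by
      have h3 : ∑ e ∈ Good, ((AS.filter fun α =>
            π e.1 e.2 (α (Sum.inl e.1)) = α (Sum.inr e.2)).card : ℝ) =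
          ∑ α ∈ AS, ((Good.filter fun e =>
            π e.1 e.2 (α (Sum.inl e.1)) = α (Sum.inr e.2)).card : ℝ) := by
        exact_mod_cast congrArg Nat.cast hswapN
      rw [h3]
      exact Finset.sum_le_sum (fun α _ => hGsub α)
    calc (Good.card : ℝ) * (AS.card : ℝ) ≤ _ := h1
    _ = τA * τB * ∑ e ∈ Good, ((AS.filter fun α =>
          π e.1 e.2 (α (Sum.inl e.1)) = α (Sum.inr e.2)).card : ℝ) := by
        rw [Finset.mul_sum]
    _ ≤ _ := by
        have := mul_le_mul_of_nonneg_left h2 (by positivity : (0:ℝ) ≤ τA * τB)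
        linarith
  have hττ : τA * τB * a = 72 * K := by
    have h1 : τA * τB * a = 72 * (s * s) := by
      rw [hτA, hτB]
      field_simp
      ring
    rw [h1, hsK]
  -- final contradiction
  have hfin : (Good.card : ℝ) * (AS.card : ℝ) < (AS.card : ℝ) * (m * K / 8) := by
    have h1 : τA * τB * ∑ α ∈ AS, ((Eproj.filter fun e =>
          π e.1 e.2 (α (Sum.inl e.1)) = α (Sum.inr e.2)).card : ℝ) <
        τA * τB * ((AS.card : ℝ) * (m * a / 576)) :=
      mul_lt_mul_of_pos_left hstrict (by positivity)
    have h2 : τA * τB * ((AS.card : ℝ) * (m * a / 576)) = (AS.card : ℝ) * (m * K / 8) := by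
      have hexp : τA * τB * ((AS.card : ℝ) * (m * a / 576)) =
          (τA * τB * a) * ((AS.card : ℝ) * m) / 576 := by ring
      rw [hexp, hττ]
      ring
    linarith only [h1, h2, hlow]
  nlinarith

end PerL

end SpannerProof

namespace SpannerProof

open Spanner

section Assemble

variable {L R Sg : Type} [Fintype L] [Fintype R] [Fintype Sg]
    [DecidableEq L] [DecidableEq R] [DecidableEq Sg]
variable {Eproj : Finset (L × R)} {π : L → R → Sg → Sg} {σ0 : Sg} {k K : ℕ}

/-- extract the duplicate index from a vertex, if any -/
def lOf {D T : ℕ} : SpV L R Sg D T → Option (Fin D)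
  | Sum.inr (Sum.inl (_, l)) => some l
  | Sum.inr (Sum.inr (Sum.inr (Sum.inl (_, l)))) => some l
  | _ => none

@[simp] lemma lOf_cDup {D T : ℕ} (i : L) (l : Fin D) :
    lOf (SpV.cDup i l : SpV L R Sg D T) = some l := rfl
@[simp] lemma lOf_xDup {D T : ℕ} (j : R) (l : Fin D) :
    lOf (SpV.xDup j l : SpV L R Sg D T) = some l := rfl
@[simp] lemma lOf_cLab {D T : ℕ} (i : L) (σ : Sg) :
    lOf (SpV.cLab i σ : SpV L R Sg D T) = none := rfl
@[simp] lemma lOf_xLab {D T : ℕ} (j : R) (σ : Sg) :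
    lOf (SpV.xLab j σ : SpV L R Sg D T) = none := rfl

theorem main_bound (hk : 2 ≤ k) (hK : 1 ≤ K)
    (hdeg : ∀ i : L, (Eproj.filter fun e => e.1 = i).card = K)
    (ha : 1 ≤ (Fintype.card L : ℝ) / (Fintype.card R : ℝ))
    (hdegR : ∀ j : R, ((Eproj.filter fun e => e.2 = j).card : ℝ) ≤
      2 * K * ((Fintype.card L : ℝ) / (Fintype.card R : ℝ)))
    (ha2 : (Fintype.card L : ℝ) / (Fintype.card R : ℝ) ≤ 12 * Real.sqrt K)
    (hsound : ∀ α : (L ⊕ R) → Sg,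
      ((Eproj.filter fun e => π e.1 e.2 (α (Sum.inl e.1)) = α (Sum.inr e.2)).card : ℝ) <
        (Fintype.card L : ℝ) * ((Fintype.card L : ℝ) / (Fintype.card R : ℝ)) / 576)
    (S : Finset (Spanner.Vt L R Sg k K × Spanner.Vt L R Sg k K))
    (hSp : IsSpanner (Spanner.Edges Eproj π σ0 k K) S (2 * k - 1)) :
    (Fintype.card R : ℝ) * k * K * Real.sqrt K * Fintype.card Sg ≤ (S.card : ℝ) := by
  classical
  obtain ⟨hS, hspan⟩ := hSp
  -- the three families of edges, for each duplicate index l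
  set A : Fin (numDup Sg k K) → L → Finset Sg := fun l i =>
    Finset.univ.filter (fun σ => (SpV.cDup i l, SpV.cLab i σ) ∈ S) with hAdef
  set B : Fin (numDup Sg k K) → R → Finset Sg := fun l j =>
    Finset.univ.filter (fun σ => (SpV.xLab j σ, SpV.xDup j l) ∈ S) with hBdef
  set O : Fin (numDup Sg k K) → Finset (L × R) := fun l =>
    Eproj.filter (fun e => (SpV.cDup e.1 l, SpV.xDup e.2 l) ∈ S) with hOdef
  -- basic edge memberships
  have hsubEL : ELedges L R Sg k K ⊆ Edges Eproj π σ0 k K := by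
    intro x hx; simp only [Edges, Finset.mem_union]; tauto
  have hsubER : ERedges L R Sg k K ⊆ Edges Eproj π σ0 k K := by
    intro x hx; simp only [Edges, Finset.mem_union]; tauto
  have hsubEO : EOuter Sg Eproj k K ⊆ Edges Eproj π σ0 k K := by
    intro x hx; simp only [Edges, Finset.mem_union]; tauto
  -- nonemptiness of A
  have hA : ∀ l i, (A l i).Nonempty := by
    intro l i
    have hmem : ((SpV.cDup i l, SpV.cLab i σ0) : _ × _) ∈ Edges Eproj π σ0 k K :=
      hsubEL (mem_ELedges.2 ⟨i, l, σ0, rfl⟩)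
    obtain ⟨p, hp, -⟩ := hspan _ hmem
    rcases first_edge hk hS hp with ⟨σ, hσ⟩ | h
    · exact ⟨σ, by simp only [hAdef, Finset.mem_filter, Finset.mem_univ, true_and]; exact hσ⟩
    · exact ⟨σ0, by simp only [hAdef, Finset.mem_filter, Finset.mem_univ, true_and]; exact h⟩
  have hB : ∀ l j, (B l j).Nonempty := by
    intro l j
    have hmem : ((SpV.xLab j σ0, SpV.xDup j l) : _ × _) ∈ Edges Eproj π σ0 k K :=
      hsubER (mem_ERedges.2 ⟨j, l, σ0, rfl⟩)
    obtain ⟨p, hp, -⟩ := hspan _ hmem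
    rcases last_edge hk hS hp with ⟨σ, hσ⟩ | ⟨-, i', hu⟩
    · exact ⟨σ, by simp only [hBdef, Finset.mem_filter, Finset.mem_univ, true_and]; exact hσ⟩
    · exfalso; simp [SpV.xLab, SpV.cDup] at hu
  have hcov : ∀ l, ∀ e ∈ Eproj, e ∈ O l ∨ ∃ σ ∈ A l e.1, π e.1 e.2 σ ∈ B l e.2 := by
    intro l e he
    have hmem : ((SpV.cDup e.1 l, SpV.xDup e.2 l) : _ × _) ∈ Edges Eproj π σ0 k K :=
      hsubEO (mem_EOuter.2 ⟨e.1, e.2, l, by simpa using he, rfl⟩)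
    obtain ⟨p, hp, hplen⟩ := hspan _ hmem
    rcases outer_dissect hk hS hp hplen with h | ⟨σ, h1, h2⟩
    · exact Or.inl (Finset.mem_filter.2 ⟨he, h⟩)
    · refine Or.inr ⟨σ, ?_, ?_⟩
      · simp only [hAdef, Finset.mem_filter, Finset.mem_univ, true_and]; exact h1
      · simp only [hBdef, Finset.mem_filter, Finset.mem_univ, true_and]; exact h2
  -- the disjoint edge families inside S
  set LA : Fin (numDup Sg k K) → Finset (Vt L R Sg k K × Vt L R Sg k K) := fun l =>
    Finset.univ.biUnion (fun i : L =>
      (A l i).image (fun σ => (SpV.cDup i l, SpV.cLab i σ))) with hLAdef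
  set RB : Fin (numDup Sg k K) → Finset (Vt L R Sg k K × Vt L R Sg k K) := fun l =>
    Finset.univ.biUnion (fun j : R =>
      (B l j).image (fun σ => (SpV.xLab j σ, SpV.xDup j l))) with hRBdef
  set OO : Fin (numDup Sg k K) → Finset (Vt L R Sg k K × Vt L R Sg k K) := fun l =>
    (O l).image (fun e => (SpV.cDup e.1 l, SpV.xDup e.2 l)) with hOOdef
  set W : Fin (numDup Sg k K) → Finset (Vt L R Sg k K × Vt L R Sg k K) := fun l =>
    LA l ∪ RB l ∪ OO l with hWdef
  -- shapes
  have hLAshape : ∀ l x, x ∈ LA l → ∃ i σ, x = (SpV.cDup i l, SpV.cLab i σ) := by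
    intro l x hx
    simp only [hLAdef, Finset.mem_biUnion, Finset.mem_image] at hx
    obtain ⟨i, -, σ, -, rfl⟩ := hx
    exact ⟨i, σ, rfl⟩
  have hRBshape : ∀ l x, x ∈ RB l → ∃ j σ, x = (SpV.xLab j σ, SpV.xDup j l) := by
    intro l x hx
    simp only [hRBdef, Finset.mem_biUnion, Finset.mem_image] at hx
    obtain ⟨j, -, σ, -, rfl⟩ := hx
    exact ⟨j, σ, rfl⟩
  have hOOshape : ∀ l x, x ∈ OO l → ∃ i j, x = (SpV.cDup i l, SpV.xDup j l) := by
    intro l x hx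
    simp only [hOOdef, Finset.mem_image] at hx
    obtain ⟨e, -, rfl⟩ := hx
    exact ⟨e.1, e.2, rfl⟩
  have hWl : ∀ l x, x ∈ W l → (lOf x.1).or (lOf x.2) = some l := by
    intro l x hx
    rcases Finset.mem_union.1 hx with hx | hx
    · rcases Finset.mem_union.1 hx with hx | hx
      · obtain ⟨i, σ, rfl⟩ := hLAshape l x hx; rfl
      · obtain ⟨j, σ, rfl⟩ := hRBshape l x hx; rfl
    · obtain ⟨i, j, rfl⟩ := hOOshape l x hx; rfl
  -- W l ⊆ S
  have hWS : ∀ l, W l ⊆ S := by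
    intro l x hx
    rcases Finset.mem_union.1 hx with hx | hx
    · rcases Finset.mem_union.1 hx with hx | hx
      · simp only [hLAdef, Finset.mem_biUnion, Finset.mem_image] at hx
        obtain ⟨i, -, σ, hσ, rfl⟩ := hx
        exact (Finset.mem_filter.1 hσ).2
      · simp only [hRBdef, Finset.mem_biUnion, Finset.mem_image] at hx
        obtain ⟨j, -, σ, hσ, rfl⟩ := hx
        exact (Finset.mem_filter.1 hσ).2
    · simp only [hOOdef, Finset.mem_image] at hx
      obtain ⟨e, he, rfl⟩ := hx
      rw [hOdef, Finset.mem_filter] at he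
      exact he.2
  -- cardinalities
  have hLAcard : ∀ l, (LA l).card = ∑ i, (A l i).card := by
    intro l
    rw [hLAdef, Finset.card_biUnion]
    · exact Finset.sum_congr rfl (fun i _ => Finset.card_image_of_injective _
        (fun σ1 σ2 h => by
          simpa [SpV.cDup, SpV.cLab, Prod.ext_iff] using h))
    · intro i1 _ i2 _ hne
      rw [Function.onFun, Finset.disjoint_left]
      intro x hx1 hx2
      simp only [Finset.mem_image] at hx1 hx2
      obtain ⟨σ1, -, rfl⟩ := hx1
      obtain ⟨σ2, -, hx⟩ := hx2
      apply hne
      have h1 := congrArg Prod.fst hx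
      simp only [SpV.cDup, Sum.inr.injEq, Sum.inl.injEq, Prod.mk.injEq] at h1
      exact h1.1.symm
  have hRBcard : ∀ l, (RB l).card = ∑ j, (B l j).card := by
    intro l
    rw [hRBdef, Finset.card_biUnion]
    · exact Finset.sum_congr rfl (fun j _ => Finset.card_image_of_injective _
        (fun σ1 σ2 h => by
          simpa [SpV.xLab, SpV.xDup, Prod.ext_iff] using h))
    · intro j1 _ j2 _ hne
      rw [Function.onFun, Finset.disjoint_left]
      intro x hx1 hx2
      simp only [Finset.mem_image] at hx1 hx2
      obtain ⟨σ1, -, rfl⟩ := hx1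
      obtain ⟨σ2, -, hx⟩ := hx2
      apply hne
      have h1 := congrArg Prod.snd hx
      simp only [SpV.xDup, Sum.inr.injEq, Sum.inl.injEq, Prod.mk.injEq] at h1
      exact h1.1.symm
  have hOOcard : ∀ l, (OO l).card = (O l).card := by
    intro l
    rw [hOOdef]
    apply Finset.card_image_of_injective
    intro e1 e2 h
    have h1 := congrArg Prod.fst h
    have h2 := congrArg Prod.snd h
    simp only [SpV.cDup, Sum.inr.injEq, Sum.inl.injEq, Prod.mk.injEq] at h1
    simp only [SpV.xDup, Sum.inr.injEq, Sum.inl.injEq, Prod.mk.injEq] at h2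
    exact Prod.ext h1.1 h2.1
  have hd1 : ∀ l, Disjoint (LA l) (RB l) := by
    intro l
    rw [Finset.disjoint_left]
    intro x hx1 hx2
    obtain ⟨i, σ, rfl⟩ := hLAshape l x hx1
    obtain ⟨j, σ', hx⟩ := hRBshape l _ hx2
    have h1 := congrArg Prod.fst hx
    simp [SpV.cDup, SpV.xLab] at h1
  have hd2 : ∀ l, Disjoint (LA l ∪ RB l) (OO l) := by
    intro l
    rw [Finset.disjoint_left]
    intro x hx1 hx2
    obtain ⟨i, j, rfl⟩ := hOOshape l x hx2
    rcases Finset.mem_union.1 hx1 with hx | hx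
    · obtain ⟨i', σ, hx⟩ := hLAshape l _ hx
      have h1 := congrArg Prod.snd hx
      simp [SpV.cLab, SpV.xDup] at h1
    · obtain ⟨j', σ, hx⟩ := hRBshape l _ hx
      have h1 := congrArg Prod.fst hx
      simp [SpV.xLab, SpV.cDup] at h1
  have hWcard : ∀ l, (W l).card = (O l).card + (∑ i, (A l i).card) + ∑ j, (B l j).card := by
    intro l
    have : W l = LA l ∪ RB l ∪ OO l := rfl
    rw [this, Finset.card_union_of_disjoint (hd2 l), Finset.card_union_of_disjoint (hd1 l),
      hLAcard, hRBcard, hOOcard]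
    omega
  have hWdisj : ∀ l1 l2 : Fin (numDup Sg k K), l1 ≠ l2 → Disjoint (W l1) (W l2) := by
    intro l1 l2 hne12
    rw [Finset.disjoint_left]
    intro x hx1 hx2
    have h1 := hWl l1 x hx1
    have h2 := hWl l2 x hx2
    rw [h1] at h2
    exact hne12 (Option.some.inj h2)
  have hsums : ∑ l, (W l).card ≤ S.card := by
    rw [← Finset.card_biUnion (fun l1 _ l2 _ h => hWdisj l1 l2 h)]
    apply Finset.card_le_card
    intro x hx
    obtain ⟨l, -, hx⟩ := Finset.mem_biUnion.1 hx
    exact hWS l hx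
  have hperl : ∀ l, (Fintype.card R : ℝ) * Real.sqrt K ≤ ((W l).card : ℝ) := by
    intro l
    rw [hWcard l]
    push_cast
    exact perL Eproj π K hK hdeg ha hdegR hsound (A l) (B l) (O l) (hA l) (hB l) (hcov l)
  calc (Fintype.card R : ℝ) * k * K * Real.sqrt K * Fintype.card Sg
      = ∑ _l : Fin (numDup Sg k K), (Fintype.card R : ℝ) * Real.sqrt K := by
        rw [Finset.sum_const, nsmul_eq_mul]
        simp only [Finset.card_univ, Fintype.card_fin, numDup]
        push_cast
        ring
  _ ≤ ∑ l, ((W l).card : ℝ) := Finset.sum_le_sum (fun l _ => hperl l)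
  _ ≤ (S.card : ℝ) := by exact_mod_cast hsums

end Assemble

end SpannerProof

/-- Lemma `directSound`.  Let `G = (V,E)` be the directed spanner instance
built (with parameters `k ≥ 2`, `K ≥ 1`) from a projection games instance in which every left
vertex has degree exactly `K`, and assume that `a := m/n ≥ 1`, every right vertex has degree at
most `2·K·a`, `a ≤ 12·√K`, and every labelling satisfies fewer than `m·a/576` edges of
`E_Proj`.  Then every `(2k−1)`-spanner of `G` has at least `n·k·K^{3/2}·|Σ|` edges. -/
theorem directed_spanner_integral_lower_bound
    {L R Sg : Type} [Fintype L] [Fintype R] [Fintype Sg]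
    [DecidableEq L] [DecidableEq R] [DecidableEq Sg]
    (Eproj : Finset (L × R)) (π : L → R → Sg → Sg) (σ0 : Sg) (k K : ℕ)
    (hk : 2 ≤ k) (hK : 1 ≤ K)
    (hdeg : ∀ i : L, (Eproj.filter fun e => e.1 = i).card = K)
    (ha : 1 ≤ (Fintype.card L : ℝ) / (Fintype.card R : ℝ))
    (hdegR : ∀ j : R, ((Eproj.filter fun e => e.2 = j).card : ℝ) ≤
      2 * K * ((Fintype.card L : ℝ) / (Fintype.card R : ℝ)))
    (ha2 : (Fintype.card L : ℝ) / (Fintype.card R : ℝ) ≤ 12 * Real.sqrt K)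
    (hsound : ∀ α : (L ⊕ R) → Sg,
      ((Eproj.filter fun e => π e.1 e.2 (α (Sum.inl e.1)) = α (Sum.inr e.2)).card : ℝ) <
        (Fintype.card L : ℝ) * ((Fintype.card L : ℝ) / (Fintype.card R : ℝ)) / 576) :
    ∀ S : Finset (Spanner.Vt L R Sg k K × Spanner.Vt L R Sg k K),
      IsSpanner (Spanner.Edges Eproj π σ0 k K) S (2 * k - 1) →
      (Fintype.card R : ℝ) * k * K * Real.sqrt K * Fintype.card Sg ≤ (S.card : ℝ) := by
  intro S hSp
  exact SpannerProof.main_bound hk hK hdeg ha hdegR ha2 hsound S hSp
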